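/- Consider the pentatopes τ₁,…,τ₄ of the prism subdivision with tags t₁ = (x_D,x_C,x_B,x_A,x_D')₀, t₂ = (x_C,x_B,x_A,x_D',x_C')₀, t₃ = (x_B,x_A,x_D',x_C',x_B')₀, t₄ = (x_A,x_D',x_C',x_B',x_A')₀. For each consecutive pair (t_i, t_{i+1}), i = 1,2,3, after one application of the bisection rule, the child of t_i containing the shared hyperface and the first child of t_{i+1} are reflected neighbors. -/

import Mathlib

/-- A tagged pentatope: an ordered 5-tuple of vertices together with a type γ ∈ {0,1,2,3}. -/
structure TP (V : Type*) where
  v : Fin 5 → V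
  γ : Fin 4

/-- The vertex permutation used in Stevenson's reflection, depending on the type. -/
def refPerm (γ : Fin 4) : Fin 5 → Fin 5 :=
  if γ = 0 then ![4, 3, 2, 1, 0]
  else if γ = 1 then ![4, 1, 3, 2, 0]
  else ![4, 1, 2, 3, 0]

/-- The reflection of a tagged pentatope. -/
def TP.reflect {V : Type*} (t : TP V) : TP V := ⟨t.v ∘ refPerm t.γ, t.γ⟩

variable {V : Type*} [AddCommGroup V] [Module ℝ V]

/-- The midpoint x' = (x₀ + x₄)/2 of the refinement edge. -/
noncomputable def TP.mid (t : TP V) : V := midpoint ℝ (t.v 0) (t.v 4)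

/-- First child of the bisection rule. -/
noncomputable def TP.child1 (t : TP V) : TP V :=
  ⟨![t.v 0, t.mid, t.v 1, t.v 2, t.v 3], t.γ + 1⟩

/-- Second child of the bisection rule. -/
noncomputable def TP.child2 (t : TP V) : TP V :=
  ⟨if t.γ = 0 then ![t.v 4, t.mid, t.v 3, t.v 2, t.v 1]
    else if t.γ = 1 then ![t.v 4, t.mid, t.v 1, t.v 3, t.v 2]
    else ![t.v 4, t.mid, t.v 1, t.v 2, t.v 3], t.γ + 1⟩

/-- Two vertex orderings agree in all but (at most) one position. -/
def agreeButOne {V : Type*} (u w : Fin 5 → V) : Prop :=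
  ∃ i : Fin 5, ∀ j : Fin 5, j ≠ i → u j = w j

/-- Reflected neighbors: same type, share a hyperface (four common vertices), and the
vertex order of t' matches that of t or of its reflection t_R in all but one
position. -/
def ReflNbr {V : Type*} (t t' : TP V) : Prop :=
  t.γ = t'.γ ∧ (Set.range t.v ∩ Set.range t'.v).encard = 4 ∧
    (agreeButOne t.v t'.v ∨ agreeButOne t.reflect.v t'.v)

/-- ψ_t : ℝ³ → ℝ⁴, appending the coordinate t. -/
def lift (t : ℝ) (x : Fin 3 → ℝ) : Fin 4 → ℝ := Fin.snoc x t

-- helpers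
lemma aux_range5 {α : Type*} (a b c d e : α) :
    Set.range ![a, b, c, d, e] = {a, b, c, d, e} := by
  ext x
  constructor
  · rintro ⟨i, rfl⟩; fin_cases i <;> simp
  · rintro (rfl | rfl | rfl | rfl | rfl)
    exacts [⟨0, rfl⟩, ⟨1, rfl⟩, ⟨2, rfl⟩, ⟨3, rfl⟩, ⟨4, rfl⟩]

lemma aux_inter_insert {α : Type*} (T : Set α) (m m' : α)
    (hm : m ∉ insert m' T) (hm' : m' ∉ insert m T) :
    insert m T ∩ insert m' T = T := by
  ext x
  simp only [Set.mem_inter_iff, Set.mem_insert_iff] at *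
  push_neg at hm hm'
  constructor
  · rintro ⟨rfl | h1, rfl | h2⟩
    · exact absurd rfl hm.1
    · exact absurd h2 hm.2
    · exact absurd h1 hm'.2
    · exact h1
  · exact fun h => ⟨Or.inr h, Or.inr h⟩

lemma aux_encard4 {α : Type*} {a b c d : α} (hab : a ≠ b) (hac : a ≠ c) (had : a ≠ d)
    (hbc : b ≠ c) (hbd : b ≠ d) (hcd : c ≠ d) : ({a, b, c, d} : Set α).encard = 4 := by
  rw [Set.encard_insert_of_notMem (by simp [hab, hac, had]),
    Set.encard_insert_of_notMem (by simp [hbc, hbd]), Set.encard_pair hcd]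
  rfl

lemma aux_pair (t t' : TP (Fin 4 → ℝ)) (w s1 s2 s3 s4 w' : Fin 4 → ℝ)
    (ht : t = ⟨![w, s1, s2, s3, s4], 0⟩) (ht' : t' = ⟨![s1, s2, s3, s4, w'], 0⟩)
    (hm : midpoint ℝ w s4 ∉ ({midpoint ℝ s1 w', s1, s2, s3, s4} : Set (Fin 4 → ℝ)))
    (hm' : midpoint ℝ s1 w' ∉ ({midpoint ℝ w s4, s1, s2, s3, s4} : Set (Fin 4 → ℝ)))
    (hcard : ({s1, s2, s3, s4} : Set (Fin 4 → ℝ)).encard = 4) :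
    ReflNbr t.child2 t'.child1 := by
  subst ht ht'
  have hc2 : TP.child2 ⟨![w, s1, s2, s3, s4], 0⟩ =
      ⟨![s4, midpoint ℝ w s4, s3, s2, s1], 1⟩ := by
    simp [TP.child2, TP.mid]
  have hc1 : TP.child1 ⟨![s1, s2, s3, s4, w'], 0⟩ =
      ⟨![s1, midpoint ℝ s1 w', s2, s3, s4], 1⟩ := by
    simp [TP.child1, TP.mid]
  rw [hc2, hc1]
  refine ⟨rfl, ?_, Or.inr ⟨1, ?_⟩⟩
  · rw [aux_range5, aux_range5]
    have e1 : ({s4, midpoint ℝ w s4, s3, s2, s1} : Set (Fin 4 → ℝ)) =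
        insert (midpoint ℝ w s4) {s1, s2, s3, s4} := by
      ext x; simp only [Set.mem_insert_iff, Set.mem_singleton_iff]; tauto
    have e2 : ({s1, midpoint ℝ s1 w', s2, s3, s4} : Set (Fin 4 → ℝ)) =
        insert (midpoint ℝ s1 w') {s1, s2, s3, s4} := by
      ext x; simp only [Set.mem_insert_iff, Set.mem_singleton_iff]; tauto
    rw [e1, e2, aux_inter_insert _ _ _ hm hm', hcard]
  · intro j hj
    fin_cases j
    · simp [TP.reflect, refPerm]
    · exact absurd rfl hj
    · simp [TP.reflect, refPerm]
    · simp [TP.reflect, refPerm]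
    · simp [TP.reflect, refPerm]

lemma aux_lift_inj {t u : ℝ} {x y : Fin 3 → ℝ} (h : lift t x = lift u y) : t = u ∧ x = y := by
  constructor
  · have := congrFun h (Fin.last 3); simpa only [lift, Fin.snoc_last] using this
  · funext j
    have := congrFun h (Fin.castSucc j); simpa [lift] using this

lemma aux_lift_ne {t u : ℝ} {x y : Fin 3 → ℝ} (h : t ≠ u ∨ x ≠ y) : lift t x ≠ lift u y := by
  intro he; rcases aux_lift_inj he with ⟨h1, h2⟩; tauto

lemma aux_midpoint_lift (t u : ℝ) (x : Fin 3 → ℝ) :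
    midpoint ℝ (lift t x) (lift u x) = lift (midpoint ℝ t u) x := by
  funext j
  rw [midpoint_eq_smul_add, midpoint_eq_smul_add]
  refine Fin.lastCases ?_ (fun i => ?_) j <;> simp only [lift, Pi.add_apply, Pi.smul_apply, Fin.snoc_last, Fin.snoc_castSucc, smul_eq_mul, invOf_eq_inv] <;> ring

/-- For the subdivision tagging t₁ = (x_D,x_C,x_B,x_A,x_D')₀,
t₂ = (x_C,x_B,x_A,x_D',x_C')₀, t₃ = (x_B,x_A,x_D',x_C',x_B')₀,
t₄ = (x_A,x_D',x_C',x_B',x_A')₀ of a prism over an affinely independent tetrahedron,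
for each consecutive pair the child of t_i containing the shared hyperface (its second
child) and the first child of t_{i+1} are reflected neighbors. -/
theorem consecutive_tagged_pentatopes_children_reflected_neighbors
    (a b c d : Fin 3 → ℝ) (hT : AffineIndependent ℝ ![a, b, c, d])
    (r s : ℝ) (hrs : r < s)
    (xA xB xC xD xA' xB' xC' xD' : Fin 4 → ℝ)
    (hA : xA = lift r a) (hB : xB = lift r b) (hC : xC = lift r c) (hD : xD = lift r d)
    (hA' : xA' = lift s a) (hB' : xB' = lift s b) (hC' : xC' = lift s c)
    (hD' : xD' = lift s d)
    (t₁ t₂ t₃ t₄ : TP (Fin 4 → ℝ))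
    (h₁ : t₁ = ⟨![xD, xC, xB, xA, xD'], 0⟩)
    (h₂ : t₂ = ⟨![xC, xB, xA, xD', xC'], 0⟩)
    (h₃ : t₃ = ⟨![xB, xA, xD', xC', xB'], 0⟩)
    (h₄ : t₄ = ⟨![xA, xD', xC', xB', xA'], 0⟩) :
    ReflNbr t₁.child2 t₂.child1 ∧ ReflNbr t₂.child2 t₃.child1 ∧
      ReflNbr t₃.child2 t₄.child1 := by
  subst hA hB hC hD hA' hB' hC' hD'
  have hinj : Function.Injective ![a, b, c, d] := hT.injective
  have key : ∀ i j : Fin 4, i ≠ j → ![a, b, c, d] i ≠ ![a, b, c, d] j :=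
    fun i j hij h => hij (hinj h)
  have hab : a ≠ b := key 0 1 (by decide)
  have hac : a ≠ c := key 0 2 (by decide)
  have had : a ≠ d := key 0 3 (by decide)
  have hbc : b ≠ c := key 1 2 (by decide)
  have hbd : b ≠ d := key 1 3 (by decide)
  have hcd : c ≠ d := key 2 3 (by decide)
  set μ := midpoint ℝ r s with hμdef
  have hμval : μ = (r + s) / 2 := by
    rw [hμdef, midpoint_eq_smul_add]; simp [smul_eq_mul]; ring
  have hμr : μ ≠ r := by rw [hμval]; intro h; linarith
  have hμs : μ ≠ s := by rw [hμval]; intro h; linarith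
  have hrsne : r ≠ s := ne_of_lt hrs
  refine ⟨?_, ?_, ?_⟩
  · refine aux_pair t₁ t₂ (lift r d) (lift r c) (lift r b) (lift r a) (lift s d)
      (lift s c) h₁ h₂ ?_ ?_ ?_
    · rw [aux_midpoint_lift, aux_midpoint_lift, ← hμdef]
      simp only [Set.mem_insert_iff, Set.mem_singleton_iff, not_or]
      exact ⟨aux_lift_ne (Or.inr hcd.symm), aux_lift_ne (Or.inl hμr),
        aux_lift_ne (Or.inl hμr), aux_lift_ne (Or.inl hμr), aux_lift_ne (Or.inl hμs)⟩
    · rw [aux_midpoint_lift, aux_midpoint_lift, ← hμdef]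
      simp only [Set.mem_insert_iff, Set.mem_singleton_iff, not_or]
      exact ⟨aux_lift_ne (Or.inr hcd), aux_lift_ne (Or.inl hμr),
        aux_lift_ne (Or.inl hμr), aux_lift_ne (Or.inl hμr), aux_lift_ne (Or.inl hμs)⟩
    · exact aux_encard4 (aux_lift_ne (Or.inr hbc.symm)) (aux_lift_ne (Or.inr hac.symm))
        (aux_lift_ne (Or.inl hrsne)) (aux_lift_ne (Or.inr hab.symm))
        (aux_lift_ne (Or.inl hrsne)) (aux_lift_ne (Or.inl hrsne))
  · refine aux_pair t₂ t₃ (lift r c) (lift r b) (lift r a) (lift s d)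
      (lift s c) (lift s b) h₂ h₃ ?_ ?_ ?_
    · rw [aux_midpoint_lift, aux_midpoint_lift, ← hμdef]
      simp only [Set.mem_insert_iff, Set.mem_singleton_iff, not_or]
      exact ⟨aux_lift_ne (Or.inr hbc.symm), aux_lift_ne (Or.inl hμr),
        aux_lift_ne (Or.inl hμr), aux_lift_ne (Or.inl hμs), aux_lift_ne (Or.inl hμs)⟩
    · rw [aux_midpoint_lift, aux_midpoint_lift, ← hμdef]
      simp only [Set.mem_insert_iff, Set.mem_singleton_iff, not_or]
      exact ⟨aux_lift_ne (Or.inr hbc), aux_lift_ne (Or.inl hμr),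
        aux_lift_ne (Or.inl hμr), aux_lift_ne (Or.inl hμs), aux_lift_ne (Or.inl hμs)⟩
    · exact aux_encard4 (aux_lift_ne (Or.inr hab.symm)) (aux_lift_ne (Or.inl hrsne))
        (aux_lift_ne (Or.inl hrsne)) (aux_lift_ne (Or.inl hrsne))
        (aux_lift_ne (Or.inl hrsne)) (aux_lift_ne (Or.inr hcd.symm))
  · refine aux_pair t₃ t₄ (lift r b) (lift r a) (lift s d) (lift s c)
      (lift s b) (lift s a) h₃ h₄ ?_ ?_ ?_
    · rw [aux_midpoint_lift, aux_midpoint_lift, ← hμdef]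
      simp only [Set.mem_insert_iff, Set.mem_singleton_iff, not_or]
      exact ⟨aux_lift_ne (Or.inr hab.symm), aux_lift_ne (Or.inl hμr),
        aux_lift_ne (Or.inl hμs), aux_lift_ne (Or.inl hμs), aux_lift_ne (Or.inl hμs)⟩
    · rw [aux_midpoint_lift, aux_midpoint_lift, ← hμdef]
      simp only [Set.mem_insert_iff, Set.mem_singleton_iff, not_or]
      exact ⟨aux_lift_ne (Or.inr hab), aux_lift_ne (Or.inl hμr),
        aux_lift_ne (Or.inl hμs), aux_lift_ne (Or.inl hμs), aux_lift_ne (Or.inl hμs)⟩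
    · exact aux_encard4 (aux_lift_ne (Or.inl hrsne)) (aux_lift_ne (Or.inl hrsne))
        (aux_lift_ne (Or.inl hrsne)) (aux_lift_ne (Or.inr hcd.symm))
        (aux_lift_ne (Or.inr hbd.symm)) (aux_lift_ne (Or.inr hbc.symm))
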